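/- Let d be even and G a finite simple d-regular graph with no connected component isomorphic to K_{d+1}. Then G has a matching of size at least ((d+2)/(2(d+3)))·v(G). -/

import Mathlib

open Finset SimpleGraph

noncomputable section

/-- `M` is a matching of `G`: a finset of edges of `G`, pairwise vertex-disjoint. -/
def IsMatchingSet {V : Type*} (G : SimpleGraph V) (M : Finset (Sym2 V)) : Prop :=
  (∀ e ∈ M, e ∈ G.edgeSet) ∧
    ∀ e ∈ M, ∀ f ∈ M, e ≠ f → ∀ v : V, ¬(v ∈ e ∧ v ∈ f)

/-- The finset of all matchings of `G`. -/
def matchingsOf {V : Type*} [Fintype V] (G : SimpleGraph V) : Finset (Finset (Sym2 V)) := by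
  classical exact Finset.univ.filter fun M => IsMatchingSet G M

/-- `m_k(G)`: the number of matchings of size `k` in `G`. -/
def mCount {V : Type*} [Fintype V] (G : SimpleGraph V) (k : ℕ) : ℕ := by
  classical exact ((matchingsOf G).filter fun M => M.card = k).card

/-- The matching generating polynomial (partition function) `M_G(λ) = ∑_M λ^{|M|}`. -/
def matchingGen {V : Type*} [Fintype V] (G : SimpleGraph V) (lam : ℝ) : ℝ :=
  ∑ M ∈ matchingsOf G, lam ^ M.card

/-- `q n` : the matching generating polynomial of the complete graph `K_n`. -/
def q (n : ℕ) (lam : ℝ) : ℝ := matchingGen (⊤ : SimpleGraph (Fin n)) lam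

set_option linter.unusedSectionVars false
set_option linter.unusedVariables false

namespace TutteAux

open scoped Classical

variable {V : Type*} [Fintype V] [DecidableEq V] {G : SimpleGraph V} {A B P Q C D S S' : Finset V} {x y w v u : V}

def Step (G : SimpleGraph V) (B : Finset V) (u v : V) : Prop := u ∈ B ∧ v ∈ B ∧ G.Adj u v

def Rel (G : SimpleGraph V) (B : Finset V) : V → V → Prop := Relation.ReflTransGen (Step G B)

lemma rel_refl : Rel G B x x := Relation.ReflTransGen.refl

lemma rel_symm (h : Rel G B x y) : Rel G B y x := by
  have hs : Std.Symm (Step G B) := ⟨by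
    rintro a b ⟨ha, hb, hab⟩
    exact ⟨hb, ha, hab.symm⟩⟩
  exact Std.Symm.symm (r := Relation.ReflTransGen (Step G B)) _ _ h

lemma rel_trans {z : V} (h : Rel G B x y) (h' : Rel G B y z) : Rel G B x z := h.trans h'

lemma rel_mem_right (hx : x ∈ B) (h : Rel G B x y) : y ∈ B := by
  induction h with
  | refl => exact hx
  | tail _ hs ih => exact hs.2.1

lemma rel_mono (hPQ : P ⊆ Q) (h : Rel G P x y) : Rel G Q x y := by
  induction h with
  | refl => exact rel_refl
  | tail _ hs ih => exact ih.tail ⟨hPQ hs.1, hPQ hs.2.1, hs.2.2⟩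

lemma rel_restrict (hPQ : P ⊆ Q)
    (hcl : ∀ u v, u ∈ P → v ∈ Q → G.Adj u v → v ∈ P)
    (hw : w ∈ P) (h : Rel G Q w x) : Rel G P w x := by
  induction h with
  | refl => exact rel_refl
  | tail hr hs ih =>
    have hb : _ ∈ P := rel_mem_right hw ih
    have hc : _ ∈ P := hcl _ _ hb hs.2.1 hs.2.2
    exact ih.tail ⟨hb, hc, hs.2.2⟩

def comp (G : SimpleGraph V) (B : Finset V) (x : V) : Finset V :=
  B.filter (fun y => Rel G B x y)

lemma mem_comp : y ∈ comp G B x ↔ y ∈ B ∧ Rel G B x y := by simp [comp]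

lemma mem_comp_self (hx : x ∈ B) : x ∈ comp G B x := mem_comp.2 ⟨hx, rel_refl⟩

lemma comp_subset : comp G B x ⊆ B := filter_subset _ _

lemma comp_eq_of_rel (h : Rel G B x y) : comp G B x = comp G B y := by
  ext z
  simp only [mem_comp]
  exact ⟨fun ⟨hz, hr⟩ => ⟨hz, rel_trans (rel_symm h) hr⟩,
    fun ⟨hz, hr⟩ => ⟨hz, rel_trans h hr⟩⟩

lemma comp_closed (hy : y ∈ comp G B x) (hv : v ∈ B) (hadj : G.Adj y v) :
    v ∈ comp G B x := by
  rw [mem_comp] at hy ⊢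
  exact ⟨hv, hy.2.tail ⟨hy.1, hv, hadj⟩⟩

def comps (G : SimpleGraph V) (B : Finset V) : Finset (Finset V) := B.image (comp G B)

lemma mem_comps : C ∈ comps G B ↔ ∃ w ∈ B, comp G B w = C := by simp [comps]

lemma comps_subset (hC : C ∈ comps G B) : C ⊆ B := by
  obtain ⟨w, _, rfl⟩ := mem_comps.1 hC; exact comp_subset

lemma comps_nonempty (hC : C ∈ comps G B) : C.Nonempty := by
  obtain ⟨w, hw, rfl⟩ := mem_comps.1 hC; exact ⟨w, mem_comp_self hw⟩

lemma comps_closed (hC : C ∈ comps G B) (hy : y ∈ C) (hv : v ∈ B) (hadj : G.Adj y v) :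
    v ∈ C := by
  obtain ⟨w, hw, rfl⟩ := mem_comps.1 hC; exact comp_closed hy hv hadj

lemma comp_eq_of_mem (hC : C ∈ comps G B) (hy : y ∈ C) : comp G B y = C := by
  obtain ⟨w, hw, rfl⟩ := mem_comps.1 hC
  exact (comp_eq_of_rel (mem_comp.1 hy).2).symm

lemma comps_eq_or_disjoint (hC : C ∈ comps G B) (hD : D ∈ comps G B) :
    C = D ∨ Disjoint C D := by
  by_cases h : Disjoint C D
  · exact Or.inr h
  · left
    obtain ⟨z, hzC, hzD⟩ := Finset.not_disjoint_iff.1 h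
    rw [← comp_eq_of_mem hC hzC, ← comp_eq_of_mem hD hzD]

lemma biUnion_comps : (comps G B).biUnion id = B := by
  apply Finset.Subset.antisymm
  · intro v hv
    simp only [Finset.mem_biUnion, id] at hv
    obtain ⟨C, hC, hvC⟩ := hv
    exact comps_subset hC hvC
  · intro v hv
    simp only [Finset.mem_biUnion, id]
    exact ⟨comp G B v, mem_comps.2 ⟨v, hv, rfl⟩, mem_comp_self hv⟩

lemma mem_comps_of (hC : C ∈ comps G B) (hsub : C ⊆ Q)
    (hcl : ∀ u w, u ∈ C → w ∈ Q → G.Adj u w → w ∈ C) : C ∈ comps G Q := by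
  obtain ⟨w, hw, rfl⟩ := mem_comps.1 hC
  have hwC : w ∈ comp G B w := mem_comp_self hw
  have h1 : comp G Q w = comp G B w := by
    apply Finset.Subset.antisymm
    · intro x hx
      obtain ⟨hxQ, hrel⟩ := mem_comp.1 hx
      exact rel_mem_right hwC (rel_restrict hsub hcl hwC hrel)
    · intro x hx
      obtain ⟨hxB, hrel⟩ := mem_comp.1 hx
      have hrel' : Rel G (comp G B w) w x :=
        rel_restrict comp_subset (fun u v hu hv hadj => comp_closed hu hv hadj) hwC hrel
      exact mem_comp.2 ⟨hsub (rel_mem_right hwC hrel'), rel_mono hsub hrel'⟩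
  exact mem_comps.2 ⟨w, hsub hwC, h1⟩

/-! ### Odd components and counting -/

def oddComps (G : SimpleGraph V) (B : Finset V) : Finset (Finset V) :=
  (comps G B).filter (fun C => Odd C.card)

def oddCompIn (G : SimpleGraph V) (B : Finset V) : ℕ := (oddComps G B).card

lemma mem_oddComps : C ∈ oddComps G B ↔ C ∈ comps G B ∧ Odd C.card := by
  simp [oddComps]

lemma card_eq_sum_comps : B.card = ∑ C ∈ comps G B, C.card := by
  have h : ∀ C ∈ comps G B, ∀ D ∈ comps G B, C ≠ D → Disjoint (id C) (id D) := by
    intro C hC D hD hne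
    rcases comps_eq_or_disjoint hC hD with h | h
    · exact absurd h hne
    · simpa using h
  have h2 := Finset.card_biUnion h
  rw [biUnion_comps] at h2
  simpa using h2

lemma odd_card_iff_odd_oddCompIn : Odd B.card ↔ Odd (oddCompIn G B) := by
  rw [card_eq_sum_comps (G := G), Finset.odd_sum_iff_odd_card_odd]
  rfl

lemma oddCompIn_mod_two : oddCompIn G B % 2 = B.card % 2 := by
  have h := odd_card_iff_odd_oddCompIn (G := G) (B := B)
  rw [Nat.odd_iff, Nat.odd_iff] at h
  omega

/-- Key counting lemma: components of `C \ S'` together with the components of `B`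
other than `C` all appear as components of `B \ S'`. -/
lemma key_count (hC : C ∈ comps G B) (hS' : S' ⊆ C) :
    oddCompIn G (C \ S') + ((oddComps G B).erase C).card ≤ oddCompIn G (B \ S') := by
  have hCB : C ⊆ B := comps_subset hC
  have hsub : C \ S' ⊆ B \ S' := sdiff_subset_sdiff hCB le_rfl
  -- components of C \ S' are components of B \ S'
  have h1 : ∀ D ∈ comps G (C \ S'), D ∈ comps G (B \ S') := by
    intro D hD
    apply mem_comps_of hD ((comps_subset hD).trans hsub)
    intro a b ha hb hadj
    have haC : a ∈ C \ S' := comps_subset hD ha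
    have hbC : b ∈ C := comps_closed hC (mem_sdiff.1 haC).1 (mem_sdiff.1 hb).1 hadj
    exact comps_closed hD ha (mem_sdiff.2 ⟨hbC, (mem_sdiff.1 hb).2⟩) hadj
  -- other components of B are components of B \ S'
  have h2 : ∀ D ∈ comps G B, D ≠ C → D ∈ comps G (B \ S') := by
    intro D hD hne
    have hdisj : Disjoint D C := by
      rcases comps_eq_or_disjoint hD hC with h | h
      · exact absurd h hne
      · exact h
    apply mem_comps_of hD
    · intro a ha
      exact mem_sdiff.2 ⟨comps_subset hD ha,
        fun haS' => (Finset.disjoint_left.1 hdisj) ha (hS' haS')⟩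
    · intro a b ha hb hadj
      exact comps_closed hD ha (mem_sdiff.1 hb).1 hadj
  -- assemble
  have hunion : oddComps G (C \ S') ∪ (oddComps G B).erase C ⊆ oddComps G (B \ S') := by
    intro D hD
    rcases Finset.mem_union.1 hD with h | h
    · obtain ⟨hc, ho⟩ := mem_oddComps.1 h
      exact mem_oddComps.2 ⟨h1 D hc, ho⟩
    · obtain ⟨hne, h'⟩ := Finset.mem_erase.1 h
      obtain ⟨hc, ho⟩ := mem_oddComps.1 h'
      exact mem_oddComps.2 ⟨h2 D hc hne, ho⟩
  have hdisj2 : Disjoint (oddComps G (C \ S')) ((oddComps G B).erase C) := by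
    rw [Finset.disjoint_left]
    intro D hD1 hD2
    obtain ⟨hne, h'⟩ := Finset.mem_erase.1 hD2
    have hDC : D ⊆ C := (comps_subset (mem_oddComps.1 hD1).1).trans sdiff_subset
    have : Disjoint D C := by
      rcases comps_eq_or_disjoint (mem_oddComps.1 h').1 hC with h | h
      · exact absurd h hne
      · exact h
    obtain ⟨a, ha⟩ := comps_nonempty (mem_oddComps.1 hD1).1
    exact Finset.disjoint_left.1 this ha (hDC ha)
  calc oddCompIn G (C \ S') + ((oddComps G B).erase C).card
      = (oddComps G (C \ S') ∪ (oddComps G B).erase C).card := (Finset.card_union_of_disjoint hdisj2).symm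
    _ ≤ oddCompIn G (B \ S') := Finset.card_le_card hunion

/-! ### Matchings on a finset of vertices -/

/-- The endpoints of an unordered pair, as a finset. -/
def everts (e : Sym2 V) : Finset V :=
  Sym2.lift ⟨fun x y => {x, y}, fun x y => by simp [Finset.pair_comm]⟩ e

lemma mem_everts {e : Sym2 V} : v ∈ everts e ↔ v ∈ e := by
  induction e with
  | _ x y => simp [everts, Sym2.mem_iff]

/-- `M` is a perfect matching of `G` on the vertex set `A`. -/
def IsPerfOn (G : SimpleGraph V) (A : Finset V) (M : Finset (Sym2 V)) : Prop :=
  (∀ e ∈ M, e ∈ G.edgeSet) ∧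
  (∀ e ∈ M, ∀ f ∈ M, e ≠ f → ∀ v : V, ¬(v ∈ e ∧ v ∈ f)) ∧
  (∀ e ∈ M, ∀ v : V, v ∈ e → v ∈ A) ∧
  (∀ v ∈ A, ∃ e ∈ M, v ∈ e)

lemma perfOn_empty : IsPerfOn G ∅ ∅ := by
  refine ⟨?_, ?_, ?_, ?_⟩ <;> simp

lemma perfOn_pair (hadj : G.Adj x y) : IsPerfOn G {x, y} {s(x, y)} := by
  refine ⟨?_, ?_, ?_, ?_⟩
  · simp [hadj]
  · intro e he f hf hne
    simp only [Finset.mem_singleton] at he hf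
    exact absurd (he.trans hf.symm) hne
  · intro e he a ha
    simp only [Finset.mem_singleton] at he
    subst he
    rcases Sym2.mem_iff.1 ha with rfl | rfl <;> simp
  · intro a ha
    refine ⟨s(x, y), Finset.mem_singleton_self _, ?_⟩
    rcases Finset.mem_insert.1 ha with rfl | ha <;> simp_all [Sym2.mem_iff]

lemma perfOn_union {A₁ A₂ : Finset V} {M₁ M₂ : Finset (Sym2 V)}
    (h₁ : IsPerfOn G A₁ M₁) (h₂ : IsPerfOn G A₂ M₂) (hd : Disjoint A₁ A₂) :
    IsPerfOn G (A₁ ∪ A₂) (M₁ ∪ M₂) := by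
  obtain ⟨he₁, hp₁, hin₁, hc₁⟩ := h₁
  obtain ⟨he₂, hp₂, hin₂, hc₂⟩ := h₂
  refine ⟨?_, ?_, ?_, ?_⟩
  · intro e he
    rcases Finset.mem_union.1 he with h | h
    · exact he₁ e h
    · exact he₂ e h
  · intro e he f hf hne a ⟨hae, haf⟩
    rcases Finset.mem_union.1 he with h | h <;> rcases Finset.mem_union.1 hf with h' | h'
    · exact hp₁ e h f h' hne a ⟨hae, haf⟩
    · exact Finset.disjoint_left.1 hd (hin₁ e h a hae) (hin₂ f h' a haf)
    · exact Finset.disjoint_left.1 hd (hin₁ f h' a haf) (hin₂ e h a hae)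
    · exact hp₂ e h f h' hne a ⟨hae, haf⟩
  · intro e he a ha
    rcases Finset.mem_union.1 he with h | h
    · exact Finset.mem_union_left _ (hin₁ e h a ha)
    · exact Finset.mem_union_right _ (hin₂ e h a ha)
  · intro a ha
    rcases Finset.mem_union.1 ha with h | h
    · obtain ⟨e, he, hae⟩ := hc₁ a h
      exact ⟨e, Finset.mem_union_left _ he, hae⟩
    · obtain ⟨e, he, hae⟩ := hc₂ a h
      exact ⟨e, Finset.mem_union_right _ he, hae⟩

lemma perfOn_biUnion {ι : Type*} (I : Finset ι) (Af : ι → Finset V) (Mf : ι → Finset (Sym2 V))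
    (hd : ∀ i ∈ I, ∀ j ∈ I, i ≠ j → Disjoint (Af i) (Af j))
    (hp : ∀ i ∈ I, IsPerfOn G (Af i) (Mf i)) :
    IsPerfOn G (I.biUnion Af) (I.biUnion Mf) := by
  refine ⟨?_, ?_, ?_, ?_⟩
  · intro e he
    obtain ⟨i, hi, hei⟩ := Finset.mem_biUnion.1 he
    exact (hp i hi).1 e hei
  · intro e he f hf hne a ⟨hae, haf⟩
    obtain ⟨i, hi, hei⟩ := Finset.mem_biUnion.1 he
    obtain ⟨j, hj, hfj⟩ := Finset.mem_biUnion.1 hf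
    by_cases hij : i = j
    · subst hij
      exact (hp i hi).2.1 e hei f hfj hne a ⟨hae, haf⟩
    · exact Finset.disjoint_left.1 (hd i hi j hj hij)
        ((hp i hi).2.2.1 e hei a hae) ((hp j hj).2.2.1 f hfj a haf)
  · intro e he a ha
    obtain ⟨i, hi, hei⟩ := Finset.mem_biUnion.1 he
    exact Finset.mem_biUnion.2 ⟨i, hi, (hp i hi).2.2.1 e hei a ha⟩
  · intro a ha
    obtain ⟨i, hi, hai⟩ := Finset.mem_biUnion.1 ha
    obtain ⟨e, he, hae⟩ := (hp i hi).2.2.2 a hai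
    exact ⟨e, Finset.mem_biUnion.2 ⟨i, hi, he⟩, hae⟩

lemma IsPerfOn.card_eq {M : Finset (Sym2 V)} (h : IsPerfOn G A M) :
    A.card = 2 * M.card := by
  obtain ⟨he, hp, hin, hc⟩ := h
  have hA : A = M.biUnion everts := by
    apply Finset.Subset.antisymm
    · intro a ha
      obtain ⟨e, heM, hae⟩ := hc a ha
      exact Finset.mem_biUnion.2 ⟨e, heM, mem_everts.2 hae⟩
    · intro a ha
      obtain ⟨e, heM, hae⟩ := Finset.mem_biUnion.1 ha
      exact hin e heM a (mem_everts.1 hae)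
  have hcard : ∀ e ∈ M, (everts e).card = 2 := by
    intro e heM
    have hE := he e heM
    induction e with
    | _ x y =>
      have hxy : G.Adj x y := hE
      have : everts s(x, y) = {x, y} := rfl
      rw [this, Finset.card_insert_of_notMem (by simp [hxy.ne]), Finset.card_singleton]
  rw [hA, Finset.card_biUnion, Finset.sum_congr rfl hcard, Finset.sum_const, smul_eq_mul,
    mul_comm]
  intro e heM f hfM hne
  rw [Function.onFun, Finset.disjoint_left]
  intro a hae haf
  exact hp e heM f hfM hne a ⟨mem_everts.1 hae, mem_everts.1 haf⟩

/-! ### Tutte's theorem on a finset of vertices -/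

theorem tutteOn (G : SimpleGraph V) :
    ∀ (n : ℕ) (A : Finset V), A.card ≤ n →
      (∀ S ⊆ A, oddCompIn G (A \ S) ≤ S.card) → ∃ M, IsPerfOn G A M := by
  intro n
  induction n with
  | zero =>
    intro A hA _
    rw [Nat.le_zero, Finset.card_eq_zero] at hA
    exact ⟨∅, hA ▸ perfOn_empty⟩
  | succ n IH =>
    intro A hAcard hcond
    rcases A.eq_empty_or_nonempty with rfl | hAne
    · exact ⟨∅, perfOn_empty⟩
    -- `A` has even cardinality.
    have hparA : A.card % 2 = 0 := by
      have h1 := hcond ∅ (Finset.empty_subset A)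
      rw [Finset.sdiff_empty] at h1
      have h2 := oddCompIn_mod_two (G := G) (B := A)
      simp only [Finset.card_empty] at h1
      omega
    -- singletons are tight
    have hsingle : ∀ v ∈ A, oddCompIn G (A \ {v}) = 1 := by
      intro v hv
      have hsub : {v} ⊆ A := Finset.singleton_subset_iff.2 hv
      have h1 := hcond {v} hsub
      have h2 := oddCompIn_mod_two (G := G) (B := A \ {v})
      rw [Finset.card_sdiff_of_subset hsub] at h2
      have h3 : 1 ≤ A.card := Finset.card_pos.2 hAne
      simp only [Finset.card_singleton] at h1 h2 ⊢
      omega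
    -- pick a tight set of maximal cardinality
    set tights := A.powerset.filter (fun S => oddCompIn G (A \ S) = S.card) with htights
    have htne : tights.Nonempty := by
      obtain ⟨v, hv⟩ := hAne
      exact ⟨{v}, Finset.mem_filter.2 ⟨Finset.mem_powerset.2 (Finset.singleton_subset_iff.2 hv),
        by simpa using hsingle v hv⟩⟩
    obtain ⟨S, hStights, hSmax⟩ := Finset.exists_max_image tights Finset.card htne
    have hSA : S ⊆ A := Finset.mem_powerset.1 (Finset.mem_filter.1 hStights).1
    have hoB : oddCompIn G (A \ S) = S.card := (Finset.mem_filter.1 hStights).2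
    have hSne : S.Nonempty := by
      rw [Finset.nonempty_iff_ne_empty]
      rintro rfl
      obtain ⟨v, hv⟩ := hAne
      have h1 : ({v} : Finset V) ∈ tights := Finset.mem_filter.2
        ⟨Finset.mem_powerset.2 (Finset.singleton_subset_iff.2 hv), by simpa using hsingle v hv⟩
      have := hSmax {v} h1
      simp at this
    set B := A \ S with hB
    -- main counting consequence
    have hcount : ∀ C ∈ comps G B, ∀ S' ⊆ C,
        oddCompIn G (C \ S') + ((oddComps G B).erase C).card ≤ S.card + S'.card := by
      intro C hC S' hS'C
      have h1 := key_count hC hS'C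
      have hS'A : S' ⊆ A := hS'C.trans ((comps_subset hC).trans Finset.sdiff_subset)
      have hdisj : Disjoint S S' := by
        rw [Finset.disjoint_left]
        intro a haS haS'
        have := (comps_subset hC) (hS'C haS')
        rw [hB, Finset.mem_sdiff] at this
        exact this.2 haS
      have hBS : B \ S' = A \ (S ∪ S') := by
        ext a
        simp only [hB, Finset.mem_sdiff, Finset.mem_union]
        tauto
      have h2 := hcond (S ∪ S') (Finset.union_subset hSA hS'A)
      rw [← hBS, Finset.card_union_of_disjoint hdisj] at h2
      omega
    have herase_odd : ∀ C ∈ comps G B, Odd C.card →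
        ((oddComps G B).erase C).card = S.card - 1 := by
      intro C hC hodd
      rw [Finset.card_erase_of_mem (mem_oddComps.2 ⟨hC, hodd⟩)]
      exact congrArg (· - 1) hoB
    have herase_even : ∀ C ∈ comps G B, ¬ Odd C.card →
        ((oddComps G B).erase C).card = S.card := by
      intro C hC hodd
      rw [Finset.erase_eq_of_notMem (fun h => hodd (mem_oddComps.1 h).2)]
      exact hoB
    have hcardB : B.card = A.card - S.card := Finset.card_sdiff_of_subset hSA
    have hScard1 : 1 ≤ S.card := Finset.card_pos.2 hSne
    have hScardA : S.card ≤ A.card := Finset.card_le_card hSA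
    -- even components have perfect matchings
    have heven : ∀ C ∈ comps G B, ¬ Odd C.card → ∃ M, IsPerfOn G C M := by
      intro C hC hnodd
      apply IH C
      · have h1 : C.card ≤ B.card := Finset.card_le_card (comps_subset hC)
        omega
      · intro S' hS'
        have h1 := hcount C hC S' hS'
        have h2 := herase_even C hC hnodd
        omega
    -- odd components are factor-critical
    have hcrit : ∀ C ∈ comps G B, Odd C.card → ∀ v ∈ C, ∃ M, IsPerfOn G (C.erase v) M := by
      intro C hC hodd v hv
      apply IH (C.erase v)
      · have h1 : C.card ≤ B.card := Finset.card_le_card (comps_subset hC)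
        have h2 : (C.erase v).card = C.card - 1 := Finset.card_erase_of_mem hv
        have h3 : 1 ≤ C.card := Finset.card_pos.2 ⟨v, hv⟩
        omega
      · intro S' hS'
        have hvS' : v ∉ S' := fun h => Finset.notMem_erase v C (hS' h)
        have hS''C : insert v S' ⊆ C :=
          Finset.insert_subset hv (hS'.trans (Finset.erase_subset v C))
        have h1 := hcount C hC (insert v S') hS''C
        have h2 := herase_odd C hC hodd
        have hins : (insert v S').card = S'.card + 1 := Finset.card_insert_of_notMem hvS'
        have hCe : C.erase v \ S' = C \ insert v S' := by
          ext a
          simp only [Finset.mem_sdiff, Finset.mem_erase, Finset.mem_insert]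
          tauto
        rw [hCe]
        by_contra hgt
        push_neg at hgt
        -- parity forces the count to equal S'.card + 2
        have hpar := oddCompIn_mod_two (G := G) (B := C \ insert v S')
        have hinsC : (insert v S').card ≤ C.card := Finset.card_le_card hS''C
        have hcardCS : (C \ insert v S').card = C.card - (S'.card + 1) := by
          rw [Finset.card_sdiff_of_subset hS''C, hins]
        have hoddC : C.card % 2 = 1 := Nat.odd_iff.1 hodd
        have ho2 : oddCompIn G (C \ insert v S') = S'.card + 2 := by omega
        -- the set S ∪ insert v S' is tight and bigger: contradiction
        have hS'A : insert v S' ⊆ A := hS''C.trans ((comps_subset hC).trans Finset.sdiff_subset)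
        have hdisj : Disjoint S (insert v S') := by
          rw [Finset.disjoint_left]
          intro a haS haS'
          have := (comps_subset hC) (hS''C haS')
          rw [hB, Finset.mem_sdiff] at this
          exact this.2 haS
        have hBS : B \ insert v S' = A \ (S ∪ insert v S') := by
          ext a
          simp only [hB, Finset.mem_sdiff, Finset.mem_union]
          tauto
        have hkey := key_count hC hS''C
        rw [hBS] at hkey
        have hle := hcond (S ∪ insert v S') (Finset.union_subset hSA hS'A)
        have hcardU : (S ∪ insert v S').card = S.card + S'.card + 1 := by
          rw [Finset.card_union_of_disjoint hdisj, hins]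
          omega
        have htight : oddCompIn G (A \ (S ∪ insert v S')) = (S ∪ insert v S').card := by omega
        have hmem : (S ∪ insert v S') ∈ tights := Finset.mem_filter.2
          ⟨Finset.mem_powerset.2 (Finset.union_subset hSA hS'A), htight⟩
        have := hSmax _ hmem
        omega
    -- Hall's condition for odd components vs S
    let ι := {C : Finset V // C ∈ oddComps G B}
    let t : ι → Finset V := fun Ci => S.filter (fun s => ∃ x ∈ Ci.1, G.Adj x s)
    have hall : ∀ J : Finset ι, J.card ≤ (J.biUnion t).card := by
      intro J
      set N := J.biUnion t with hN
      have hNS : N ⊆ S := by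
        intro a ha
        obtain ⟨Ci, _, h⟩ := Finset.mem_biUnion.1 ha
        exact Finset.filter_subset _ _ h
      have hmem : ∀ Ci : ι, Ci ∈ J → Ci.1 ∈ oddComps G (A \ N) := by
        intro Ci hCi
        have hC := (mem_oddComps.1 Ci.2).1
        refine mem_oddComps.2 ⟨?_, (mem_oddComps.1 Ci.2).2⟩
        apply mem_comps_of hC
        · refine (comps_subset hC).trans ?_
          exact Finset.sdiff_subset_sdiff (le_refl A) hNS
        · intro a b ha hb hadj
          by_cases hbB : b ∈ B
          · exact comps_closed hC ha hbB hadj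
          · exfalso
            have hbA : b ∈ A := (Finset.mem_sdiff.1 hb).1
            have hbS : b ∈ S := by
              by_contra h
              exact hbB (Finset.mem_sdiff.2 ⟨hbA, h⟩)
            have hbt : b ∈ t Ci := Finset.mem_filter.2 ⟨hbS, ⟨a, ha, hadj⟩⟩
            exact (Finset.mem_sdiff.1 hb).2 (Finset.mem_biUnion.2 ⟨Ci, hCi, hbt⟩)
      have himg : J.image Subtype.val ⊆ oddComps G (A \ N) := by
        intro C hC
        obtain ⟨Ci, hCi, rfl⟩ := Finset.mem_image.1 hC
        exact hmem Ci hCi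
      have hcardJ : (J.image Subtype.val).card = J.card :=
        Finset.card_image_of_injective J Subtype.val_injective
      have h1 := Finset.card_le_card himg
      have h2 := hcond N (hNS.trans hSA)
      have h3 : oddCompIn G (A \ N) = (oddComps G (A \ N)).card := rfl
      omega
    obtain ⟨f, hfinj, hft⟩ :=
      (Finset.all_card_le_biUnion_card_iff_exists_injective t).1 hall
    have hfS : ∀ Ci : ι, f Ci ∈ S := fun Ci => Finset.filter_subset _ _ (hft Ci)
    -- surjectivity of f onto S
    have hcardι : Fintype.card ι = S.card := by
      rw [Fintype.card_coe]
      exact hoB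
    have himage : (Finset.univ : Finset ι).image f = S := by
      apply Finset.eq_of_subset_of_card_le
      · intro s hs
        obtain ⟨Ci, _, rfl⟩ := Finset.mem_image.1 hs
        exact hfS Ci
      · rw [Finset.card_image_of_injective _ hfinj, Finset.card_univ, hcardι]
    -- choose attachment vertices
    have hxC : ∀ Ci : ι, ∃ x ∈ Ci.1, G.Adj x (f Ci) := fun Ci => (Finset.mem_filter.1 (hft Ci)).2
    choose xv hxv hadjx using hxC
    -- matchings on odd components minus attachment vertex
    have hoddM : ∀ Ci : ι, ∃ M, IsPerfOn G (Ci.1.erase (xv Ci)) M := fun Ci =>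
      hcrit Ci.1 (mem_oddComps.1 Ci.2).1 (mem_oddComps.1 Ci.2).2 (xv Ci) (hxv Ci)
    choose oM hoM using hoddM
    have hCcomp : ∀ Ci : ι, Ci.1 ∈ comps G B := fun Ci => (mem_oddComps.1 Ci.2).1
    have hfnC : ∀ Ci Cj : ι, f Ci ∉ Cj.1 := by
      intro Ci Cj h
      have := (comps_subset (hCcomp Cj)) h
      rw [hB, Finset.mem_sdiff] at this
      exact this.2 (hfS Ci)
    -- augmented matchings on odd components
    have hodda : ∀ Ci : ι,
        IsPerfOn G (insert (f Ci) Ci.1) (insert s(xv Ci, f Ci) (oM Ci)) := by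
      intro Ci
      have hsets : insert (f Ci) Ci.1 = {xv Ci, f Ci} ∪ Ci.1.erase (xv Ci) := by
        ext a
        simp only [Finset.mem_insert, Finset.mem_union, Finset.mem_erase, Finset.mem_singleton]
        constructor
        · rintro (rfl | h)
          · tauto
          · by_cases hax : a = xv Ci
            · subst hax; tauto
            · tauto
        · rintro ((rfl | rfl) | ⟨_, h⟩)
          · exact Or.inr (hxv Ci)
          · exact Or.inl rfl
          · exact Or.inr h
      have hMeq : insert s(xv Ci, f Ci) (oM Ci) = {s(xv Ci, f Ci)} ∪ oM Ci :=
        Finset.insert_eq _ _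
      rw [hsets, hMeq]
      apply perfOn_union (perfOn_pair (hadjx Ci)) (hoM Ci)
      rw [Finset.disjoint_left]
      intro a ha ha'
      rcases Finset.mem_insert.1 ha with rfl | ha2
      · exact Finset.notMem_erase _ _ ha'
      · rw [Finset.mem_singleton] at ha2
        subst ha2
        exact hfnC Ci Ci (Finset.erase_subset _ _ ha')
    -- even components and their matchings
    set evens := (comps G B).filter (fun C => ¬ Odd C.card) with hevens
    let eM : Finset V → Finset (Sym2 V) := fun C =>
      if h : ∃ M, IsPerfOn G C M then h.choose else ∅
    have heM : ∀ C ∈ evens, IsPerfOn G C (eM C) := by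
      intro C hC
      have h := heven C (Finset.mem_filter.1 hC).1 (Finset.mem_filter.1 hC).2
      simp only [eM, dif_pos h]
      exact h.choose_spec
    -- assemble
    have hMeven : IsPerfOn G (evens.biUnion id) (evens.biUnion eM) := by
      apply perfOn_biUnion
      · intro i hi j hj hij
        rcases comps_eq_or_disjoint (Finset.mem_filter.1 hi).1 (Finset.mem_filter.1 hj).1
          with h | h
        · exact absurd h hij
        · simpa using h
      · exact heM
    have hModd : IsPerfOn G ((Finset.univ : Finset ι).biUnion (fun Ci => insert (f Ci) Ci.1))
        ((Finset.univ : Finset ι).biUnion (fun Ci => insert s(xv Ci, f Ci) (oM Ci))) := by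
      apply perfOn_biUnion
      · intro i _ j _ hij
        have hij1 : i.1 ≠ j.1 := fun h => hij (Subtype.ext h)
        have hdisjC : Disjoint i.1 j.1 := by
          rcases comps_eq_or_disjoint (hCcomp i) (hCcomp j) with h | h
          · exact absurd h hij1
          · exact h
        rw [Finset.disjoint_left]
        intro a ha ha'
        rcases Finset.mem_insert.1 ha with rfl | ha2
        · rcases Finset.mem_insert.1 ha' with h | h
          · exact hij (hfinj h)
          · exact hfnC i j h
        · rcases Finset.mem_insert.1 ha' with rfl | h
          · exact hfnC j i ha2
          · exact Finset.disjoint_left.1 hdisjC ha2 h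
      · intro Ci _
        exact hodda Ci
    have hdisjEO : Disjoint (evens.biUnion id)
        ((Finset.univ : Finset ι).biUnion (fun Ci => insert (f Ci) Ci.1)) := by
      rw [Finset.disjoint_left]
      intro a ha ha'
      obtain ⟨C, hC, haC⟩ := Finset.mem_biUnion.1 ha
      obtain ⟨Ci, _, haCi⟩ := Finset.mem_biUnion.1 ha'
      simp only [id] at haC
      rcases Finset.mem_insert.1 haCi with rfl | h
      · -- a = f Ci ∈ S but a ∈ C ⊆ B
        have := (comps_subset (Finset.mem_filter.1 hC).1) haC
        rw [hB, Finset.mem_sdiff] at this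
        exact this.2 (hfS Ci)
      · -- a in even comp C and odd comp Ci.1 : distinct comps
        have hne : C ≠ Ci.1 := by
          intro heq
          exact (Finset.mem_filter.1 hC).2 (heq ▸ (mem_oddComps.1 Ci.2).2)
        rcases comps_eq_or_disjoint (Finset.mem_filter.1 hC).1 (hCcomp Ci) with h' | h'
        · exact hne h'
        · exact Finset.disjoint_left.1 h' haC h
    have hsetA : evens.biUnion id ∪
        (Finset.univ : Finset ι).biUnion (fun Ci => insert (f Ci) Ci.1) = A := by
      apply Finset.Subset.antisymm
      · intro a ha
        rcases Finset.mem_union.1 ha with h | h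
        · obtain ⟨C, hC, haC⟩ := Finset.mem_biUnion.1 h
          simp only [id] at haC
          exact Finset.sdiff_subset (comps_subset (Finset.mem_filter.1 hC).1 haC)
        · obtain ⟨Ci, _, haCi⟩ := Finset.mem_biUnion.1 h
          rcases Finset.mem_insert.1 haCi with rfl | h2
          · exact hSA (hfS Ci)
          · exact Finset.sdiff_subset (comps_subset (hCcomp Ci) h2)
      · intro a ha
        by_cases haS : a ∈ S
        · have : a ∈ (Finset.univ : Finset ι).image f := himage ▸ haS
          obtain ⟨Ci, _, rfl⟩ := Finset.mem_image.1 this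
          exact Finset.mem_union_right _
            (Finset.mem_biUnion.2 ⟨Ci, Finset.mem_univ _, Finset.mem_insert_self _ _⟩)
        · have haB : a ∈ B := Finset.mem_sdiff.2 ⟨ha, haS⟩
          have hacomp : comp G B a ∈ comps G B := mem_comps.2 ⟨a, haB, rfl⟩
          have haIn : a ∈ comp G B a := mem_comp_self haB
          by_cases hodd : Odd (comp G B a).card
          · refine Finset.mem_union_right _ (Finset.mem_biUnion.2
              ⟨⟨comp G B a, mem_oddComps.2 ⟨hacomp, hodd⟩⟩, Finset.mem_univ _, ?_⟩)
            exact Finset.mem_insert_of_mem haIn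
          · refine Finset.mem_union_left _ (Finset.mem_biUnion.2 ⟨comp G B a, ?_, ?_⟩)
            · exact Finset.mem_filter.2 ⟨hacomp, hodd⟩
            · simpa using haIn
    refine ⟨evens.biUnion eM ∪
      (Finset.univ : Finset ι).biUnion (fun Ci => insert s(xv Ci, f Ci) (oM Ci)), ?_⟩
    rw [← hsetA]
    exact perfOn_union hMeven hModd hdisjEO

/-! ### The join with `b` universal vertices, and the Berge defect theorem -/

def joinGraph (G : SimpleGraph V) (b : ℕ) : SimpleGraph (V ⊕ Fin b) where
  Adj x y :=
    match x, y with
    | .inl u, .inl v => G.Adj u v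
    | .inl _, .inr _ => True
    | .inr _, .inl _ => True
    | .inr i, .inr j => i ≠ j
  symm := by
    constructor
    intro x y h
    cases x <;> cases y <;> simp_all <;> first | exact h.symm | exact Ne.symm h
  loopless := by
    constructor
    intro x h
    cases x <;> simp_all

lemma joinGraph_adj_inl_inl {b : ℕ} {a c : V} :
    (joinGraph G b).Adj (Sum.inl a) (Sum.inl c) ↔ G.Adj a c := Iff.rfl

lemma joinGraph_adj_inr {b : ℕ} {j : Fin b} {z : V ⊕ Fin b} (h : z ≠ Sum.inr j) :
    (joinGraph G b).Adj (Sum.inr j) z := by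
  cases z with
  | inl v => trivial
  | inr i =>
    have hij : i ≠ j := fun hc => h (by rw [hc])
    exact fun hc => hij hc.symm

lemma rel_joinGraph_inl {b : ℕ} {X : Finset V} {x : V} {z : V ⊕ Fin b}
    (h : Rel (joinGraph G b) (X.image Sum.inl) (Sum.inl x) z) :
    ∃ y : V, z = Sum.inl y ∧ Rel G X x y := by
  induction h with
  | refl => exact ⟨x, rfl, rel_refl⟩
  | tail hr hs ih =>
    obtain ⟨y, rfl, hrel⟩ := ih
    obtain ⟨hbm, hcm, hadj⟩ := hs
    obtain ⟨y', hy', rfl⟩ := Finset.mem_image.1 hcm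
    refine ⟨y', rfl, hrel.tail ?_⟩
    have hyX : y ∈ X := by
      obtain ⟨y'', hy'', heq⟩ := Finset.mem_image.1 hbm
      rwa [show y'' = y from by injection heq] at hy''
    exact ⟨hyX, hy', hadj⟩

lemma rel_joinGraph_inl_iff {b : ℕ} {X : Finset V} {x y : V} :
    Rel (joinGraph G b) (X.image Sum.inl) (Sum.inl x) (Sum.inl y) ↔ Rel G X x y := by
  constructor
  · intro h
    obtain ⟨y', heq, hrel⟩ := rel_joinGraph_inl h
    have hy : y = y' := by injection heq
    subst hy
    exact hrel
  · intro h
    induction h with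
    | refl => exact rel_refl
    | tail hr hs ih =>
      exact ih.tail ⟨Finset.mem_image_of_mem _ hs.1, Finset.mem_image_of_mem _ hs.2.1, hs.2.2⟩

lemma comp_joinGraph_inl {b : ℕ} {X : Finset V} {x : V} :
    comp (joinGraph G b) (X.image Sum.inl) (Sum.inl x) = (comp G X x).image Sum.inl := by
  ext z
  constructor
  · intro hz
    obtain ⟨hzm, hrel⟩ := mem_comp.1 hz
    obtain ⟨y, rfl, hrel'⟩ := rel_joinGraph_inl hrel
    obtain ⟨y', hy', heq⟩ := Finset.mem_image.1 hzm
    have hyy : y' = y := by injection heq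
    subst hyy
    exact Finset.mem_image_of_mem _ (mem_comp.2 ⟨hy', hrel'⟩)
  · intro hz
    obtain ⟨y, hy, rfl⟩ := Finset.mem_image.1 hz
    obtain ⟨hyX, hrel⟩ := mem_comp.1 hy
    exact mem_comp.2 ⟨Finset.mem_image_of_mem _ hyX, rel_joinGraph_inl_iff.2 hrel⟩

lemma oddCompIn_joinGraph {b : ℕ} {X : Finset V} :
    oddCompIn (joinGraph G b) (X.image Sum.inl) = oddCompIn G X := by
  have hcomps : comps (joinGraph G b) (X.image Sum.inl)
      = (comps G X).image (Finset.image Sum.inl) := by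
    ext C
    constructor
    · intro hC
      obtain ⟨w, hw, rfl⟩ := mem_comps.1 hC
      obtain ⟨x, hx, rfl⟩ := Finset.mem_image.1 hw
      rw [comp_joinGraph_inl]
      exact Finset.mem_image_of_mem _ (mem_comps.2 ⟨x, hx, rfl⟩)
    · intro hC
      obtain ⟨D, hD, rfl⟩ := Finset.mem_image.1 hC
      obtain ⟨x, hx, rfl⟩ := mem_comps.1 hD
      rw [← comp_joinGraph_inl]
      exact mem_comps.2 ⟨Sum.inl x, Finset.mem_image_of_mem _ hx, rfl⟩
  unfold oddCompIn oddComps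
  rw [hcomps, Finset.filter_image,
    Finset.card_image_of_injective _ (Finset.image_injective Sum.inl_injective)]
  congr 1
  apply Finset.filter_congr
  intro C _
  simp [Finset.card_image_of_injective _ Sum.inl_injective]

lemma comps_of_univ_vert {b : ℕ} {Y : Finset (V ⊕ Fin b)} {j : Fin b}
    (hj : Sum.inr j ∈ Y) : comps (joinGraph G b) Y = {Y} := by
  have hrel : ∀ y ∈ Y, Rel (joinGraph G b) Y (Sum.inr j) y := by
    intro y hy
    by_cases hyj : y = Sum.inr j
    · subst hyj; exact rel_refl
    · exact Relation.ReflTransGen.single ⟨hj, hy, joinGraph_adj_inr (fun h => hyj h)⟩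
  have hcomp : ∀ z ∈ Y, comp (joinGraph G b) Y z = Y := by
    intro z hz
    apply Finset.Subset.antisymm comp_subset
    intro y hy
    exact mem_comp.2 ⟨hy, rel_trans (rel_symm (hrel z hz)) (hrel y hy)⟩
  apply Finset.Subset.antisymm
  · intro C hC
    obtain ⟨w, hw, rfl⟩ := mem_comps.1 hC
    rw [hcomp w hw]
    exact Finset.mem_singleton_self _
  · intro C hC
    rw [Finset.mem_singleton] at hC
    subst hC
    exact mem_comps.2 ⟨Sum.inr j, hj, hcomp _ hj⟩

/-- Berge's defect theorem (the hard direction). -/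
theorem berge (G : SimpleGraph V) [Nonempty V] (b : ℕ)
    (hpar : (Fintype.card V + b) % 2 = 0)
    (hcond : ∀ S : Finset V, oddCompIn G (Finset.univ \ S) ≤ S.card + b) :
    ∃ M : Finset (Sym2 V), IsMatchingSet G M ∧ Fintype.card V ≤ 2 * M.card + b := by
  set J := joinGraph G b with hJ
  have hcount : Fintype.card (V ⊕ Fin b) = Fintype.card V + b := by
    simp [Fintype.card_sum]
  -- Tutte condition for the join
  have hcondJ : ∀ S' ⊆ (Finset.univ : Finset (V ⊕ Fin b)),
      oddCompIn J (Finset.univ \ S') ≤ S'.card := by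
    intro S' _
    by_cases hj : ∃ j : Fin b, Sum.inr j ∉ S'
    · obtain ⟨j, hjS⟩ := hj
      have hjY : Sum.inr j ∈ Finset.univ \ S' := Finset.mem_sdiff.2 ⟨Finset.mem_univ _, hjS⟩
      have h1 : comps J (Finset.univ \ S') = {Finset.univ \ S'} := comps_of_univ_vert hjY
      have h2 : oddCompIn J (Finset.univ \ S') ≤ 1 := by
        unfold oddCompIn oddComps
        rw [h1]
        exact (Finset.card_filter_le _ _).trans (by simp)
      rcases S'.eq_empty_or_nonempty with rfl | hne
      · have h3 := oddCompIn_mod_two (G := J) (B := (Finset.univ \ ∅ : Finset (V ⊕ Fin b)))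
        have h4 : (Finset.univ \ ∅ : Finset (V ⊕ Fin b)).card = Fintype.card V + b := by
          rw [Finset.sdiff_empty, Finset.card_univ, hcount]
        simp only [Finset.card_empty]
        omega
      · have := Finset.card_pos.2 hne
        omega
    · push_neg at hj
      set T := Finset.univ.filter (fun v : V => Sum.inl v ∈ S') with hT
      have hYT : Finset.univ \ S' = (Finset.univ \ T).image Sum.inl := by
        ext z
        cases z with
        | inl v =>
          simp only [Finset.mem_sdiff, Finset.mem_univ, true_and, Finset.mem_image, hT,
            Finset.mem_filter]
          constructor
          · intro h
            exact ⟨v, by simpa using h, rfl⟩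
          · rintro ⟨y, hy, heq⟩
            have : y = v := by injection heq
            subst this
            simpa using hy
        | inr i =>
          simp only [Finset.mem_sdiff, Finset.mem_univ, true_and, Finset.mem_image]
          constructor
          · intro h; exact absurd (hj i) h
          · rintro ⟨y, _, heq⟩; exact absurd heq (by simp)
      rw [hYT, oddCompIn_joinGraph]
      have h1 := hcond T
      have h2 : T.card + b ≤ S'.card := by
        have hsub : T.image Sum.inl ∪ (Finset.univ : Finset (Fin b)).image Sum.inr ⊆ S' := by
          intro z hz
          rcases Finset.mem_union.1 hz with h | h
          · obtain ⟨v, hv, rfl⟩ := Finset.mem_image.1 h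
            exact (Finset.mem_filter.1 hv).2
          · obtain ⟨i, _, rfl⟩ := Finset.mem_image.1 h
            exact hj i
        have hdisj : Disjoint (T.image Sum.inl)
            ((Finset.univ : Finset (Fin b)).image Sum.inr) := by
          rw [Finset.disjoint_left]
          rintro z hz hz'
          obtain ⟨v, _, rfl⟩ := Finset.mem_image.1 hz
          obtain ⟨i, _, heq⟩ := Finset.mem_image.1 hz'
          exact absurd heq (by simp)
        have := Finset.card_le_card hsub
        rw [Finset.card_union_of_disjoint hdisj, Finset.card_image_of_injective _
          Sum.inl_injective, Finset.card_image_of_injective _ Sum.inr_injective,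
          Finset.card_univ, Fintype.card_fin] at this
        exact this
      omega
  obtain ⟨M', hM'⟩ := tutteOn J (Fintype.card (V ⊕ Fin b)) Finset.univ
    (by rw [Finset.card_univ]) hcondJ
  obtain ⟨hedge, hpw, hin, hcov⟩ := hM'
  -- uniqueness of the covering edge
  have huniq : ∀ (z : V ⊕ Fin b) (e f : Sym2 (V ⊕ Fin b)),
      e ∈ M' → f ∈ M' → z ∈ e → z ∈ f → e = f := by
    intro z e f he hf hze hzf
    by_contra hne
    exact hpw e he f hf hne z ⟨hze, hzf⟩
  classical
  -- fibers
  have hφ : ∀ v : V, ∃ e ∈ M', Sum.inl v ∈ e := fun v => hcov _ (Finset.mem_univ _)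
  choose φ hφM hφmem using hφ
  have hψ : ∀ i : Fin b, ∃ e ∈ M', Sum.inr i ∈ e := fun i => hcov _ (Finset.mem_univ _)
  choose ψ hψM hψmem using hψ
  have hn : Fintype.card V = ∑ e ∈ M', (Finset.univ.filter (fun v : V => φ v = e)).card := by
    have h := Finset.card_eq_sum_card_fiberwise (fun (v : V) (_ : v ∈ Finset.univ) => hφM v)
    rwa [Finset.card_univ] at h
  have hb : b = ∑ e ∈ M', (Finset.univ.filter (fun i : Fin b => ψ i = e)).card := by
    have h := Finset.card_eq_sum_card_fiberwise (fun (i : Fin b) (_ : i ∈ Finset.univ) => hψM i)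
    rwa [Finset.card_univ, Fintype.card_fin] at h
  -- per-edge endpoint decomposition
  have hsplit : ∀ e ∈ M',
      (Finset.univ.filter (fun v : V => φ v = e)).card
        + (Finset.univ.filter (fun i : Fin b => ψ i = e)).card = 2 := by
    intro e he
    have hev : everts e = ((Finset.univ.filter (fun v : V => φ v = e)).image Sum.inl)
        ∪ ((Finset.univ.filter (fun i : Fin b => ψ i = e)).image Sum.inr) := by
      ext z
      rw [mem_everts]
      constructor
      · intro hz
        cases z with
        | inl v =>
          refine Finset.mem_union_left _ (Finset.mem_image_of_mem _ ?_)
          exact Finset.mem_filter.2 ⟨Finset.mem_univ _, huniq _ _ _ (hφM v) he (hφmem v) hz⟩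
        | inr i =>
          refine Finset.mem_union_right _ (Finset.mem_image_of_mem _ ?_)
          exact Finset.mem_filter.2 ⟨Finset.mem_univ _, huniq _ _ _ (hψM i) he (hψmem i) hz⟩
      · intro hz
        rcases Finset.mem_union.1 hz with h | h
        · obtain ⟨v, hv, rfl⟩ := Finset.mem_image.1 h
          have := (Finset.mem_filter.1 hv).2
          subst this
          exact hφmem v
        · obtain ⟨i, hi, rfl⟩ := Finset.mem_image.1 h
          have := (Finset.mem_filter.1 hi).2
          subst this
          exact hψmem i
    have hdisj : Disjoint ((Finset.univ.filter (fun v : V => φ v = e)).image Sum.inl)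
        ((Finset.univ.filter (fun i : Fin b => ψ i = e)).image Sum.inr) := by
      rw [Finset.disjoint_left]
      rintro z hz hz'
      obtain ⟨v, _, rfl⟩ := Finset.mem_image.1 hz
      obtain ⟨i, _, heq⟩ := Finset.mem_image.1 hz'
      exact absurd heq (by simp)
    have hc2 : (everts e).card = 2 := by
      have hE := hedge e he
      induction e with
      | _ x y =>
        have hxy : (joinGraph G b).Adj x y := hE
        have : everts s(x, y) = {x, y} := rfl
        rw [this, Finset.card_insert_of_notMem (by simp [hxy.ne]), Finset.card_singleton]
    rw [hev, Finset.card_union_of_disjoint hdisj, Finset.card_image_of_injective _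
      Sum.inl_injective, Finset.card_image_of_injective _ Sum.inr_injective] at hc2
    exact hc2
  -- the both-left edges
  set M2 := M'.filter (fun e => ∀ z ∈ e, z.isLeft) with hM2
  have hrest : ∀ e ∈ M', e ∉ M2 →
      1 ≤ (Finset.univ.filter (fun i : Fin b => ψ i = e)).card := by
    intro e he hne
    rw [hM2, Finset.mem_filter] at hne
    push_neg at hne
    obtain ⟨z, hze, hzr⟩ := hne he
    cases z with
    | inl v => simp at hzr
    | inr i =>
      refine Finset.card_pos.2 ⟨i, Finset.mem_filter.2 ⟨Finset.mem_univ _, ?_⟩⟩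
      exact huniq _ _ _ (hψM i) he (hψmem i) hze
  have hkey : Fintype.card V ≤ 2 * M2.card + b := by
    have h1 : Fintype.card V = ∑ e ∈ M2, (Finset.univ.filter (fun v : V => φ v = e)).card
        + ∑ e ∈ M'.filter (fun e => ¬ ∀ z ∈ e, z.isLeft),
            (Finset.univ.filter (fun v : V => φ v = e)).card := by
      rw [hn, hM2]
      exact (Finset.sum_filter_add_sum_filter_not M' _ _).symm
    have h2 : ∑ e ∈ M2, (Finset.univ.filter (fun v : V => φ v = e)).card ≤ 2 * M2.card := by
      have := Finset.sum_le_card_nsmul M2 (fun e => (Finset.univ.filter (fun v : V => φ v = e)).card) 2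
        (fun e he => by
          show (Finset.univ.filter (fun v : V => φ v = e)).card ≤ 2
          have := hsplit e (Finset.filter_subset _ _ he)
          omega)
      simpa [mul_comm] using this
    have h3 : ∑ e ∈ M'.filter (fun e => ¬ ∀ z ∈ e, z.isLeft),
        (Finset.univ.filter (fun v : V => φ v = e)).card
        ≤ (M'.filter (fun e => ¬ ∀ z ∈ e, z.isLeft)).card := by
      have := Finset.sum_le_card_nsmul (M'.filter (fun e => ¬ ∀ z ∈ e, z.isLeft))
        (fun e => (Finset.univ.filter (fun v : V => φ v = e)).card) 1
        (fun e he => by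
          obtain ⟨heM, hnp⟩ := Finset.mem_filter.1 he
          have hne : e ∉ M2 := by
            rw [hM2, Finset.mem_filter]
            tauto
          show (Finset.univ.filter (fun v : V => φ v = e)).card ≤ 1
          have := hsplit e heM
          have := hrest e heM hne
          omega)
      simpa using this
    have h4 : (M'.filter (fun e => ¬ ∀ z ∈ e, z.isLeft)).card ≤ b := by
      have ha := Finset.card_nsmul_le_sum (M'.filter (fun e => ¬ ∀ z ∈ e, z.isLeft))
        (fun e => (Finset.univ.filter (fun i : Fin b => ψ i = e)).card) 1
        (fun e he => by
          obtain ⟨heM, hnp⟩ := Finset.mem_filter.1 he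
          have hne : e ∉ M2 := by
            rw [hM2, Finset.mem_filter]
            tauto
          exact hrest e heM hne)
      have hbb : ∑ e ∈ M'.filter (fun e => ¬ ∀ z ∈ e, z.isLeft),
          (Finset.univ.filter (fun i : Fin b => ψ i = e)).card ≤ b := by
        exact le_of_le_of_eq (Finset.sum_le_sum_of_subset (Finset.filter_subset _ _)) hb.symm
      simpa using ha.trans hbb
    omega
  -- extract the matching on V
  have hrep : ∀ e ∈ M2, ∃ a c : V, e = s(Sum.inl a, Sum.inl c) ∧ G.Adj a c := by
    intro e he
    obtain ⟨he', hleft⟩ := Finset.mem_filter.1 he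
    have hE := hedge e he'
    induction e with
    | _ x y =>
      cases x with
      | inl a =>
        cases y with
        | inl c => exact ⟨a, c, rfl, hE⟩
        | inr i =>
          exact absurd (hleft (Sum.inr i) (by simp [Sym2.mem_iff])) (by simp)
      | inr i => exact absurd (hleft (Sum.inr i) (by simp [Sym2.mem_iff])) (by simp)
  let g : V ⊕ Fin b → V := Sum.elim id (fun _ => Classical.arbitrary V)
  have hmapg : ∀ a c : V, Sym2.map g s(Sum.inl a, Sum.inl c) = s(a, c) := by
    intro a c
    simp [g, Sym2.map_pair_eq]
  have hinj : Set.InjOn (Sym2.map g) M2 := by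
    intro e he f hf heq
    obtain ⟨a, c, rfl, _⟩ := hrep e he
    obtain ⟨a', c', rfl, _⟩ := hrep f hf
    rw [hmapg, hmapg] at heq
    rcases Sym2.eq_iff.1 heq with ⟨rfl, rfl⟩ | ⟨rfl, rfl⟩
    · rfl
    · exact Sym2.eq_swap
  set MV := M2.image (Sym2.map g) with hMV
  have hcardMV : MV.card = M2.card := Finset.card_image_of_injOn hinj
  have hmemMV : ∀ e' ∈ MV, ∃ e ∈ M2, ∃ a c : V,
      e = s(Sum.inl a, Sum.inl c) ∧ G.Adj a c ∧ e' = s(a, c) := by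
    intro e' he'
    obtain ⟨e, he, rfl⟩ := Finset.mem_image.1 he'
    obtain ⟨a, c, rfl, hadj⟩ := hrep e he
    exact ⟨s(Sum.inl a, Sum.inl c), he, a, c, rfl, hadj, hmapg a c⟩
  refine ⟨MV, ⟨?_, ?_⟩, ?_⟩
  · intro e' he'
    obtain ⟨e, _, a, c, _, hadj, rfl⟩ := hmemMV e' he'
    exact hadj
  · intro e' he' f' hf' hne v ⟨hv1, hv2⟩
    obtain ⟨e, he, a, c, rfl, _, rfl⟩ := hmemMV e' he'
    obtain ⟨f, hf, a', c', rfl, _, rfl⟩ := hmemMV f' hf'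
    have hef : s(Sum.inl a, Sum.inl c) ≠ (s(Sum.inl a', Sum.inl c') : Sym2 (V ⊕ Fin b)) := by
      intro h
      have h2 := congrArg (Sym2.map g) h
      rw [hmapg, hmapg] at h2
      exact hne h2
    have hv1' : (Sum.inl v : V ⊕ Fin b) ∈ (s(Sum.inl a, Sum.inl c) : Sym2 (V ⊕ Fin b)) := by
      rcases Sym2.mem_iff.1 hv1 with rfl | rfl <;> simp
    have hv2' : (Sum.inl v : V ⊕ Fin b) ∈ (s(Sum.inl a', Sum.inl c') : Sym2 (V ⊕ Fin b)) := by
      rcases Sym2.mem_iff.1 hv2 with rfl | rfl <;> simp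
    exact hpw _ (Finset.filter_subset _ _ he) _ (Finset.filter_subset _ _ hf) hef
      (Sum.inl v) ⟨hv1', hv2'⟩
  · rw [hcardMV]
    exact hkey

/-! ### The odd-component counting bound for regular clique-free graphs -/

lemma count_bound (G : SimpleGraph V) [DecidableRel G.Adj] {d : ℕ} (hd : d ≠ 0) (hdev : Even d)
    (hreg : G.IsRegularOfDegree d) (hfree : G.CliqueFree (d + 1)) (S : Finset V) :
    (oddCompIn G (Finset.univ \ S) : ℝ) ≤ S.card + (Fintype.card V : ℝ) / (d + 3) := by
  set B := (Finset.univ \ S : Finset V) with hB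
  set odds := oddComps G B with hodds
  -- the sum of the `S`-degrees over a component
  set eC : Finset V → ℕ := fun C => ∑ v ∈ C, (G.neighborFinset v ∩ S).card with heC
  -- basic facts about components
  have hCS : ∀ C ∈ comps G B, ∀ v ∈ C, v ∉ S := by
    intro C hC v hv
    have := comps_subset hC hv
    rw [hB, Finset.mem_sdiff] at this
    exact this.2
  have hdeg : ∀ C ∈ comps G B, ∀ v ∈ C,
      (G.neighborFinset v ∩ C).card + (G.neighborFinset v ∩ S).card = d := by
    intro C hC v hv
    have hsub : G.neighborFinset v ⊆ (G.neighborFinset v ∩ C) ∪ (G.neighborFinset v ∩ S) := by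
      intro w hw
      by_cases hwS : w ∈ S
      · exact Finset.mem_union_right _ (Finset.mem_inter.2 ⟨hw, hwS⟩)
      · have hwB : w ∈ B := by
          rw [hB, Finset.mem_sdiff]
          exact ⟨Finset.mem_univ _, hwS⟩
        have : w ∈ C := comps_closed hC hv hwB ((SimpleGraph.mem_neighborFinset _ _ _).1 hw)
        exact Finset.mem_union_left _ (Finset.mem_inter.2 ⟨hw, this⟩)
    have hdisj : Disjoint (G.neighborFinset v ∩ C) (G.neighborFinset v ∩ S) := by
      rw [Finset.disjoint_left]
      intro w hw hw'
      exact hCS C hC w (Finset.mem_inter.1 hw).2 (Finset.mem_inter.1 hw').2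
    have h1 : ((G.neighborFinset v ∩ C) ∪ (G.neighborFinset v ∩ S)).card
        = G.degree v := by
      apply le_antisymm
      · apply Finset.card_le_card
        intro w hw
        rcases Finset.mem_union.1 hw with h | h <;> exact (Finset.mem_inter.1 h).1
      · exact Finset.card_le_card hsub
    rw [← Finset.card_union_of_disjoint hdisj, h1, hreg v]
  have hnbrC : ∀ C ∈ comps G B, ∀ v ∈ C, (G.neighborFinset v ∩ C) ⊆ C.erase v := by
    intro C hC v hv w hw
    obtain ⟨hw1, hw2⟩ := Finset.mem_inter.1 hw
    refine Finset.mem_erase.2 ⟨?_, hw2⟩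
    intro h
    subst h
    exact G.loopless.irrefl w ((SimpleGraph.mem_neighborFinset _ _ _).1 hw1)
  -- the key per-component inequality
  have hmain : ∀ C ∈ odds, d * (d + 3) ≤ d * C.card + (d + 2) * eC C := by
    intro C hCodds
    obtain ⟨hC, hCodd⟩ := mem_oddComps.1 hCodds
    set m := C.card with hm
    have hm1 : 1 ≤ m := Finset.card_pos.2 (comps_nonempty hC)
    by_cases hbig : d + 3 ≤ m
    · calc d * (d + 3) ≤ d * m := Nat.mul_le_mul_left d hbig
        _ ≤ d * m + (d + 2) * eC C := Nat.le_add_right _ _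
    · push_neg at hbig
      have hmne : m ≠ d + 2 := by
        intro h
        obtain ⟨k, hk⟩ := hdev
        obtain ⟨l, hl⟩ := hCodd
        omega
      by_cases hsmall : m ≤ d
      · -- small components: every vertex sends at least `d + 1 - m` edges to `S`
        obtain ⟨j, hj⟩ : ∃ j, d = m + j := ⟨d - m, by omega⟩
        have hvS : ∀ v ∈ C, j + 1 ≤ (G.neighborFinset v ∩ S).card := by
          intro v hv
          have h1 := hdeg C hC v hv
          have h2 : (G.neighborFinset v ∩ C).card ≤ m - 1 := by
            have := Finset.card_le_card (hnbrC C hC v hv)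
            rwa [Finset.card_erase_of_mem hv] at this
          omega
        have h5 : m * (j + 1) ≤ eC C := by
          have := Finset.card_nsmul_le_sum C
            (fun v => (G.neighborFinset v ∩ S).card) (j + 1) hvS
          simpa [hm, mul_comm] using this
        have h6 : j + m ≤ m * (j + 1) := by
          have : j ≤ m * j := Nat.le_mul_of_pos_left j (by omega)
          nlinarith
        have hE : d ≤ eC C := by omega
        calc d * (d + 3) = d * 1 + (d + 2) * d := by ring
          _ ≤ d * m + (d + 2) * eC C :=
            Nat.add_le_add (Nat.mul_le_mul_left d hm1) (Nat.mul_le_mul_left (d + 2) hE)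
      · -- m = d + 1 : at least two edges leave, else we get a (d+1)-clique
        have hmd1 : m = d + 1 := by omega
        have hE2 : 2 ≤ eC C := by
          by_contra hlt
          push_neg at hlt
          -- vertices with an edge to S
          have hfew : (C.filter (fun v => (G.neighborFinset v ∩ S).card ≠ 0)).card ≤ 1 := by
            have h1 : (C.filter (fun v => (G.neighborFinset v ∩ S).card ≠ 0)).card
                ≤ ∑ v ∈ C.filter (fun v => (G.neighborFinset v ∩ S).card ≠ 0),
                    (G.neighborFinset v ∩ S).card := by
              have := Finset.card_nsmul_le_sum
                (C.filter (fun v => (G.neighborFinset v ∩ S).card ≠ 0))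
                (fun v => (G.neighborFinset v ∩ S).card) 1
                (fun v hv => by
                  show 1 ≤ (G.neighborFinset v ∩ S).card
                  have := (Finset.mem_filter.1 hv).2
                  omega)
              simpa using this
            have h2 : ∑ v ∈ C.filter (fun v => (G.neighborFinset v ∩ S).card ≠ 0),
                (G.neighborFinset v ∩ S).card ≤ eC C :=
              Finset.sum_le_sum_of_subset (Finset.filter_subset _ _)
            omega
          -- all other vertices are adjacent to the whole component
          have hall : ∀ v ∈ C, (G.neighborFinset v ∩ S).card = 0 →
              G.neighborFinset v ∩ C = C.erase v := by
            intro v hv hv0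
            apply Finset.eq_of_subset_of_card_le (hnbrC C hC v hv)
            rw [Finset.card_erase_of_mem hv]
            have := hdeg C hC v hv
            omega
          -- C is a clique
          have hclique : G.IsNClique (d + 1) C := by
            constructor
            · intro x hx y hy hxy
              simp only [Finset.coe_sort_coe, Finset.mem_coe] at hx hy
              by_cases hxW : (G.neighborFinset x ∩ S).card = 0
              · have := hall x hx hxW
                have hy' : y ∈ G.neighborFinset x ∩ C := by
                  rw [this]
                  exact Finset.mem_erase.2 ⟨fun h => hxy h.symm, hy⟩
                exact (SimpleGraph.mem_neighborFinset _ _ _).1 (Finset.mem_inter.1 hy').1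
              · by_cases hyW : (G.neighborFinset y ∩ S).card = 0
                · have := hall y hy hyW
                  have hx' : x ∈ G.neighborFinset y ∩ C := by
                    rw [this]
                    exact Finset.mem_erase.2 ⟨fun h => hxy h, hx⟩
                  exact ((SimpleGraph.mem_neighborFinset _ _ _).1
                    (Finset.mem_inter.1 hx').1).symm
                · exfalso
                  have hxmem : x ∈ C.filter (fun v => (G.neighborFinset v ∩ S).card ≠ 0) :=
                    Finset.mem_filter.2 ⟨hx, hxW⟩
                  have hymem : y ∈ C.filter (fun v => (G.neighborFinset v ∩ S).card ≠ 0) :=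
                    Finset.mem_filter.2 ⟨hy, hyW⟩
                  have := Finset.one_lt_card.2 ⟨x, hxmem, y, hymem, hxy⟩
                  omega
            · omega
          exact hfree C hclique
        nlinarith
  -- summing up
  have hF2 : ∑ C ∈ odds, C.card ≤ Fintype.card V - S.card := by
    have h1 : ∑ C ∈ odds, C.card ≤ ∑ C ∈ comps G B, C.card :=
      Finset.sum_le_sum_of_subset (Finset.filter_subset _ _)
    rw [← card_eq_sum_comps] at h1
    have h2 : B.card = Fintype.card V - S.card := by
      rw [hB, Finset.card_sdiff_of_subset (Finset.subset_univ S), Finset.card_univ]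
    omega
  have hF1 : ∑ C ∈ odds, eC C ≤ d * S.card := by
    have hdisjodds : ∀ C ∈ odds, ∀ D ∈ odds, C ≠ D → Disjoint C D := by
      intro C hC D hD hne
      rcases comps_eq_or_disjoint (mem_oddComps.1 hC).1 (mem_oddComps.1 hD).1 with h | h
      · exact absurd h hne
      · exact h
    have hpd : Set.PairwiseDisjoint (↑odds : Set (Finset V)) id := by
      intro C hC D hD hne
      simpa [Function.onFun] using hdisjodds C (by simpa using hC) D (by simpa using hD) hne
    have h1 : ∑ C ∈ odds, eC C
        = ∑ v ∈ odds.biUnion id, (G.neighborFinset v ∩ S).card := by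
      rw [Finset.sum_biUnion hpd]
      simp [heC]
    have h2 : ∑ v ∈ odds.biUnion id, (G.neighborFinset v ∩ S).card
        ≤ ∑ v ∈ Finset.univ, (G.neighborFinset v ∩ S).card :=
      Finset.sum_le_sum_of_subset (Finset.subset_univ _)
    have h3 : ∑ v ∈ Finset.univ, (G.neighborFinset v ∩ S).card = d * S.card := by
      have hsplit : ∀ v : V, (G.neighborFinset v ∩ S).card
          = ∑ s ∈ S, if G.Adj v s then 1 else 0 := by
        intro v
        rw [← Finset.card_filter]
        congr 1
        ext s
        simp [Finset.mem_inter, SimpleGraph.mem_neighborFinset, and_comm]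
      simp_rw [hsplit]
      rw [Finset.sum_comm]
      have : ∀ s ∈ S, (∑ v ∈ Finset.univ, if G.Adj v s then 1 else 0) = d := by
        intro s _
        rw [← Finset.card_filter]
        have : Finset.univ.filter (fun v => G.Adj v s) = G.neighborFinset s := by
          ext v
          simp [SimpleGraph.mem_neighborFinset, SimpleGraph.adj_comm]
        rw [this]
        exact hreg s
      rw [Finset.sum_congr rfl this, Finset.sum_const, smul_eq_mul, mul_comm]
    omega
  -- combine in ℕ then pass to ℝ
  have hsumup : oddCompIn G B * (d * (d + 3)) ≤ d * (Fintype.card V - S.card)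
      + (d + 2) * (d * S.card) := by
    have h1 : oddCompIn G B * (d * (d + 3)) = ∑ _C ∈ odds, d * (d + 3) := by
      rw [Finset.sum_const, smul_eq_mul]
      rfl
    have h2 : ∑ C ∈ odds, (d * C.card + (d + 2) * eC C)
        = d * (∑ C ∈ odds, C.card) + (d + 2) * (∑ C ∈ odds, eC C) := by
      rw [Finset.sum_add_distrib, Finset.mul_sum, Finset.mul_sum]
    have h3 := Finset.sum_le_sum hmain
    have h4 : d * (∑ C ∈ odds, C.card) ≤ d * (Fintype.card V - S.card) :=
      Nat.mul_le_mul_left d hF2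
    have h5 : (d + 2) * (∑ C ∈ odds, eC C) ≤ (d + 2) * (d * S.card) :=
      Nat.mul_le_mul_left (d + 2) hF1
    omega
  -- final real-number manipulation
  have hSn : S.card ≤ Fintype.card V := by
    rw [← Finset.card_univ]
    exact Finset.card_le_card (Finset.subset_univ S)
  have hcast : (oddCompIn G B : ℝ) * (d * (d + 3))
      ≤ d * ((Fintype.card V : ℝ) - S.card) + (d + 2) * (d * S.card) := by
    have := hsumup
    have hc : ((Fintype.card V - S.card : ℕ) : ℝ) = (Fintype.card V : ℝ) - S.card := by
      rw [Nat.cast_sub hSn]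
    calc (oddCompIn G B : ℝ) * (d * (d + 3))
        = ((oddCompIn G B * (d * (d + 3)) : ℕ) : ℝ) := by push_cast; ring
      _ ≤ ((d * (Fintype.card V - S.card) + (d + 2) * (d * S.card) : ℕ) : ℝ) := by
          exact_mod_cast this
      _ = d * ((Fintype.card V : ℝ) - S.card) + (d + 2) * (d * S.card) := by
          push_cast [Nat.cast_sub hSn]; ring
  have hdpos : (0 : ℝ) < d := by
    have : 1 ≤ d := Nat.one_le_iff_ne_zero.2 hd
    exact_mod_cast Nat.lt_of_lt_of_le Nat.zero_lt_one this
  have hd3pos : (0 : ℝ) < (d : ℝ) + 3 := by linarith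
  have hprod : (0 : ℝ) < (d : ℝ) * ((d : ℝ) + 3) := mul_pos hdpos hd3pos
  rw [← mul_le_mul_iff_of_pos_right hprod]
  have hrhs : ((S.card : ℝ) + (Fintype.card V : ℝ) / (d + 3)) * ((d : ℝ) * ((d : ℝ) + 3))
      = (S.card : ℝ) * ((d : ℝ) * ((d : ℝ) + 3)) + (Fintype.card V : ℝ) * d := by
    field_simp
  rw [hrhs]
  have hS0 : (0 : ℝ) ≤ (S.card : ℝ) := Nat.cast_nonneg _
  nlinarith [hcast]

end TutteAux

open TutteAux in
theorem large_matching_even_degree' {V : Type*} [Fintype V]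
    (d : ℕ) (hdev : Even d) (G : SimpleGraph V) [DecidableRel G.Adj]
    (hreg : G.IsRegularOfDegree d) (hfree : G.CliqueFree (d + 1)) :
    ∃ M : Finset (Sym2 V), IsMatchingSet G M ∧
      ((d : ℝ) + 2) / (2 * ((d : ℝ) + 3)) * (Fintype.card V) ≤ M.card := by
  classical
  rcases isEmpty_or_nonempty V with hV | hV
  · refine ⟨∅, ⟨by simp, by simp⟩, ?_⟩
    have h0 : Fintype.card V = 0 := Fintype.card_eq_zero
    rw [h0]
    norm_num
  · have hd : d ≠ 0 := by
      rintro rfl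
      obtain ⟨v⟩ := hV
      refine hfree {v} ⟨?_, by simp⟩
      simp only [Finset.coe_singleton]
      exact Set.pairwise_singleton v G.Adj
    set n := Fintype.card V with hn
    set fdef : Finset V → ℕ := fun S => oddCompIn G (Finset.univ \ S) - S.card with hfdef
    set b := (Finset.univ : Finset (Finset V)).sup fdef with hbdef
    have hcondb : ∀ S : Finset V, oddCompIn G (Finset.univ \ S) ≤ S.card + b := by
      intro S
      have h1 : fdef S ≤ b := Finset.le_sup (Finset.mem_univ S)
      simp only [hfdef] at h1
      omega
    obtain ⟨S₀, _, hS₀⟩ := Finset.exists_mem_eq_sup (Finset.univ : Finset (Finset V))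
      ⟨∅, Finset.mem_univ ∅⟩ fdef
    have hS₀b : b = oddCompIn G (Finset.univ \ S₀) - S₀.card := by
      rw [hbdef, hS₀]
    have hS₀n : S₀.card ≤ n := by
      rw [hn, ← Finset.card_univ]
      exact Finset.card_le_card (Finset.subset_univ _)
    have hd3pos : (0 : ℝ) < (d : ℝ) + 3 := by positivity
    -- b is at most n/(d+3)
    have hble : (b : ℝ) ≤ (n : ℝ) / ((d : ℝ) + 3) := by
      have hcb := count_bound G hd hdev hreg hfree S₀
      rw [← hn] at hcb
      by_cases h : oddCompIn G (Finset.univ \ S₀) ≤ S₀.card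
      · have : b = 0 := by omega
        rw [this]
        simp only [Nat.cast_zero]
        positivity
      · push_neg at h
        have : (b : ℝ) = (oddCompIn G (Finset.univ \ S₀) : ℝ) - S₀.card := by
          rw [hS₀b, Nat.cast_sub (le_of_lt h)]
        rw [this]
        linarith
    -- parity
    have hpar : (n + b) % 2 = 0 := by
      have h1 := oddCompIn_mod_two (G := G) (B := (Finset.univ \ S₀ : Finset V))
      have h2 : (Finset.univ \ S₀ : Finset V).card = n - S₀.card := by
        rw [Finset.card_sdiff_of_subset (Finset.subset_univ _), Finset.card_univ, hn]
      have h3 := hcondb ∅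
      have h4 := oddCompIn_mod_two (G := G) (B := (Finset.univ \ ∅ : Finset V))
      have h5 : (Finset.univ \ ∅ : Finset V).card = n := by
        rw [Finset.sdiff_empty, Finset.card_univ, hn]
      simp only [Finset.card_empty] at h3
      omega
    obtain ⟨M, hM, hMcard⟩ := berge G b hpar hcondb
    refine ⟨M, hM, ?_⟩
    have h1 : (n : ℝ) ≤ 2 * M.card + b := by exact_mod_cast hMcard
    have hnb : (n : ℝ) / ((d : ℝ) + 3) * ((d : ℝ) + 3) = n :=
      div_mul_cancel₀ _ (ne_of_gt hd3pos)
    have h3 : (b : ℝ) * ((d : ℝ) + 3) ≤ n := by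
      have := mul_le_mul_of_nonneg_right hble (le_of_lt hd3pos)
      rwa [hnb] at this
    rw [div_mul_eq_mul_div, div_le_iff₀ (by positivity)]
    have h2 : (n : ℝ) * ((d : ℝ) + 3) ≤ (2 * M.card + b) * ((d : ℝ) + 3) :=
      mul_le_mul_of_nonneg_right h1 (le_of_lt hd3pos)
    nlinarith [h2, h3]


/-- if `d` is even and `G` is a finite simple `d`-regular graph with
no connected component isomorphic to `K_{d+1}` (equivalently, for a `d`-regular
graph, no `(d+1)`-clique), then `G` has a matching of size at least
`((d+2)/(2(d+3)))·v(G)`. -/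
theorem large_matching_even_degree {V : Type*} [Fintype V]
    (d : ℕ) (hdev : Even d) (G : SimpleGraph V) [DecidableRel G.Adj]
    (hreg : G.IsRegularOfDegree d) (hfree : G.CliqueFree (d + 1)) :
    ∃ M : Finset (Sym2 V), IsMatchingSet G M ∧
      ((d : ℝ) + 2) / (2 * ((d : ℝ) + 3)) * (Fintype.card V) ≤ M.card := by
  exact large_matching_even_degree' d hdev G hreg hfree
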